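/- Let Ψ_Poisson(z) = e^{μ(z−1)} be the PGF of a Poisson(μ) random variable, Ψ_{v1}(z) = (z + λ(1−z))/(1 + λ(1−z)) and Ψ_{v2}(z) = 1/(1 + λ(1−z)). Then the PGF of the Laguerre distribution with signal parameter μ and noise parameter λ satisfies Ψ_Laguerre(z) = Ψ_Poisson(Ψ_{v1}(z)) · Ψ_{v2}(z). -/

import Mathlib

open Real

/-- The Laguerre pmf with signal parameter `μ` and noise parameter `lam`. -/
noncomputable def laguerrePMF (μ lam : ℝ) (k : ℕ) : ℝ :=
  Real.exp (-μ / lam) / (1 + lam) * (lam / (1 + lam)) ^ k *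
    ∑' j : ℕ, (μ / (lam * (1 + lam))) ^ j *
      ((k + j).factorial : ℝ) / ((j.factorial : ℝ) ^ 2 * (k.factorial : ℝ))

lemma laguerre_inner_hasSum {x a : ℝ} (hx : |x| < 1) (j : ℕ) :
    HasSum (fun k : ℕ => x ^ k * (a ^ j * ((k + j).factorial : ℝ) /
        ((j.factorial : ℝ) ^ 2 * (k.factorial : ℝ))))
      (a ^ j / (j.factorial : ℝ) * (1 / (1 - x) ^ (j + 1))) := by
  have h := (hasSum_choose_mul_geometric_of_norm_lt_one j
    (show ‖x‖ < 1 by rwa [Real.norm_eq_abs])).mul_left (a ^ j / (j.factorial : ℝ))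
  have key : ∀ k : ℕ, x ^ k * (a ^ j * ((k + j).factorial : ℝ) /
      ((j.factorial : ℝ) ^ 2 * (k.factorial : ℝ)))
      = a ^ j / (j.factorial : ℝ) * ((((k + j).choose j : ℕ) : ℝ) * x ^ k) := by
    intro k
    have hc : (((k + j).choose j : ℕ) : ℝ)
        = ((k + j).factorial : ℝ) / ((j.factorial : ℝ) * (k.factorial : ℝ)) := by
      rw [Nat.cast_choose ℝ (Nat.le_add_left j k), Nat.add_sub_cancel]
    have h1 : (j.factorial : ℝ) ≠ 0 := Nat.cast_ne_zero.2 j.factorial_ne_zero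
    have h2 : (k.factorial : ℝ) ≠ 0 := Nat.cast_ne_zero.2 k.factorial_ne_zero
    rw [hc]
    field_simp
  simpa only [key] using h

lemma laguerre_aux_alg {a x : ℝ} (hx : 1 - x ≠ 0) (j : ℕ) :
    a ^ j / (j.factorial : ℝ) * (1 / (1 - x) ^ (j + 1))
      = (a / (1 - x)) ^ j / (j.factorial : ℝ) * (1 / (1 - x)) := by
  rw [div_pow, pow_succ, one_div, one_div, mul_inv]
  have hj : ((j.factorial : ℝ)) ≠ 0 := Nat.cast_ne_zero.2 j.factorial_ne_zero
  have hp : (1 - x) ^ j ≠ 0 := pow_ne_zero _ hx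
  field_simp
  try ring
  try tauto

theorem laguerre_pgf_decomposition (μ lam : ℝ) (hμ : 0 ≤ μ) (hlam : 0 < lam)
    (z : ℝ) (hz : |z| ≤ 1) :
    (∑' k : ℕ, laguerrePMF μ lam k * z ^ k) =
      Real.exp (μ * ((z + lam * (1 - z)) / (1 + lam * (1 - z)) - 1)) *
        (1 / (1 + lam * (1 - z))) := by
  have hlam1 : (0:ℝ) < 1 + lam := by linarith
  obtain ⟨x, hxdef⟩ : ∃ t : ℝ, t = lam * z / (1 + lam) := ⟨_, rfl⟩
  obtain ⟨a, hadef⟩ : ∃ t : ℝ, t = μ / (lam * (1 + lam)) := ⟨_, rfl⟩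
  have ha : 0 ≤ a := by rw [hadef]; positivity
  have hxlt : |x| < 1 := by
    have habs : |x| = lam * |z| / (1 + lam) := by
      rw [hxdef, abs_div, abs_mul, abs_of_pos hlam, abs_of_pos hlam1]
    rw [habs, div_lt_one hlam1]
    nlinarith [abs_nonneg z]
  have hx1 : 0 < 1 - x := by have := (abs_lt.1 hxlt).2; linarith
  have hax1 : 0 < 1 - |x| := by linarith
  have hD : 1 + lam * (1 - z) = (1 + lam) * (1 - x) := by
    rw [hxdef]; field_simp; ring
  have hDpos : 0 < 1 + lam * (1 - z) := by rw [hD]; positivity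
  obtain ⟨F, hFdef⟩ : ∃ F : ℕ → ℕ → ℝ, F = fun k j => x ^ k *
      (a ^ j * ((k + j).factorial : ℝ) /
      ((j.factorial : ℝ) ^ 2 * (k.factorial : ℝ))) := ⟨_, rfl⟩
  -- Step A: rewrite each summand
  have hA : ∀ k : ℕ, laguerrePMF μ lam k * z ^ k
      = Real.exp (-μ / lam) / (1 + lam) * ∑' j : ℕ, F k j := by
    intro k
    have hb : (lam / (1 + lam)) ^ k * z ^ k = x ^ k := by
      rw [hxdef, ← mul_pow, div_mul_eq_mul_div]
    calc laguerrePMF μ lam k * z ^ k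
        = Real.exp (-μ / lam) / (1 + lam) * ((lam / (1 + lam)) ^ k * z ^ k *
            ∑' j : ℕ, a ^ j * ((k + j).factorial : ℝ) /
              ((j.factorial : ℝ) ^ 2 * (k.factorial : ℝ))) := by
          simp only [laguerrePMF, ← hadef]; try ring
      _ = Real.exp (-μ / lam) / (1 + lam) * ∑' j : ℕ, F k j := by
          rw [hb, hFdef, ← tsum_mul_left]
  -- Step C: summability of the double family
  have habsF : ∀ k j : ℕ, |F k j| = |x| ^ k * (a ^ j * ((k + j).factorial : ℝ) /
      ((j.factorial : ℝ) ^ 2 * (k.factorial : ℝ))) := by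
    intro k j
    rw [hFdef, abs_mul, abs_pow]
    congr 1
    exact abs_of_nonneg (by positivity)
  have hGsum : ∀ j : ℕ, HasSum (fun k => |F k j|)
      (a ^ j / (j.factorial : ℝ) * (1 / (1 - |x|) ^ (j + 1))) := by
    intro j
    simpa only [habsF] using laguerre_inner_hasSum (x := |x|) (a := a) (by rwa [abs_abs]) j
  have hG : Summable (fun p : ℕ × ℕ => |F p.2 p.1|) := by
    rw [summable_prod_of_nonneg (fun p => abs_nonneg _)]
    refine ⟨fun j => (hGsum j).summable, ?_⟩
    have heq : ∀ j : ℕ, (∑' k, |F k j|)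
        = (a / (1 - |x|)) ^ j / (j.factorial : ℝ) * (1 / (1 - |x|)) := fun j => by
      rw [(hGsum j).tsum_eq, laguerre_aux_alg hax1.ne']
    simp only [heq]
    exact (Real.summable_pow_div_factorial _).mul_right _
  have huncurry : Summable (Function.uncurry F) := by
    have h1 : Summable (fun p : ℕ × ℕ => F p.2 p.1) := summable_abs_iff.1 hG
    exact (Equiv.prodComm ℕ ℕ).summable_iff.1 h1
  -- Step D: swap sums
  have hcols : ∀ j : ℕ, Summable (fun k => F k j) := fun j => by
    rw [hFdef]; exact (laguerre_inner_hasSum hxlt j).summable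
  have hrows : ∀ k : ℕ, Summable (F k) := fun k => huncurry.prod_factor k
  have hswap : ∑' (k : ℕ) (j : ℕ), F k j = ∑' (j : ℕ) (k : ℕ), F k j :=
    (Summable.tsum_comm' huncurry hrows hcols).symm
  -- Step E: evaluate
  have hexp_tsum : ∀ t : ℝ, Real.exp t = ∑' n : ℕ, t ^ n / (n.factorial : ℝ) := by
    intro t
    rw [Real.exp_eq_exp_ℝ, NormedSpace.exp_eq_tsum_div]
  have hE : ∑' (j : ℕ) (k : ℕ), F k j = Real.exp (a / (1 - x)) * (1 / (1 - x)) := by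
    have heq : ∀ j : ℕ, (∑' k, F k j)
        = (a / (1 - x)) ^ j / (j.factorial : ℝ) * (1 / (1 - x)) := fun j => by
      rw [hFdef, (laguerre_inner_hasSum hxlt j).tsum_eq, laguerre_aux_alg hx1.ne']
    simp only [heq]
    rw [tsum_mul_right, ← hexp_tsum]
  -- assemble
  calc (∑' k : ℕ, laguerrePMF μ lam k * z ^ k)
      = ∑' k : ℕ, Real.exp (-μ / lam) / (1 + lam) * ∑' j : ℕ, F k j := tsum_congr hA
    _ = Real.exp (-μ / lam) / (1 + lam) * ∑' (k : ℕ) (j : ℕ), F k j := tsum_mul_left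
    _ = Real.exp (-μ / lam) / (1 + lam) * (Real.exp (a / (1 - x)) * (1 / (1 - x))) := by
        rw [hswap, hE]
    _ = Real.exp (μ * ((z + lam * (1 - z)) / (1 + lam * (1 - z)) - 1)) *
        (1 / (1 + lam * (1 - z))) := by
        have hax : a / (1 - x) = μ / (lam * (1 + lam * (1 - z))) := by
          rw [hadef, hD]
          field_simp [hlam.ne', hlam1.ne', hx1.ne']
          try ring
          try tauto
        have hexps : μ * ((z + lam * (1 - z)) / (1 + lam * (1 - z)) - 1)
            = -μ / lam + a / (1 - x) := by
          rw [hax]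
          field_simp [hlam.ne', hDpos.ne']
          ring
        rw [hexps, Real.exp_add, hD]
        field_simp
        try ring
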